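/- Let F be a finite field and let G be the affine group of F, i.e. the set F × Fˣ with multiplication (a,b)·(c,d) = (a + bc, bd). For every ring automorphism φ of F let φ̂ denote the group automorphism of G given by φ̂(a,b) = (φ(a), φ(b)). Then for every group automorphism α of G there exist g ∈ G and a ring automorphism φ of F such that α(h) = g⁻¹·φ̂(h)·g for all h ∈ G; moreover φ is uniquely determined by α (equivalently, if g⁻¹·φ̂(h)·g = g'⁻¹·φ̂'(h)·g' for all h ∈ G, then φ = φ'). -/

import Mathlib

/-- The affine group of a field `F`: the set `F × Fˣ` with multiplication
`(a,b)·(c,d) = (a + bc, bd)`. -/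
@[ext]
structure Aff (F : Type*) [Field F] where
  a : F
  b : Fˣ

namespace Aff

variable {F : Type*} [Field F]

instance : Mul (Aff F) := ⟨fun z w => ⟨z.a + (z.b : F) * w.a, z.b * w.b⟩⟩
instance : One (Aff F) := ⟨⟨0, 1⟩⟩
instance : Inv (Aff F) := ⟨fun z => ⟨-(((z.b⁻¹ : Fˣ) : F) * z.a), z.b⁻¹⟩⟩

lemma mul_def (z w : Aff F) : z * w = ⟨z.a + (z.b : F) * w.a, z.b * w.b⟩ := rfl
lemma one_def : (1 : Aff F) = ⟨0, 1⟩ := rfl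
lemma inv_def (z : Aff F) : z⁻¹ = ⟨-(((z.b⁻¹ : Fˣ) : F) * z.a), z.b⁻¹⟩ := rfl

instance : Group (Aff F) where
  mul_assoc z w u := by
    simp only [mul_def, Aff.mk.injEq, Units.val_mul]
    exact ⟨by ring, mul_assoc _ _ _⟩
  one_mul z := by
    obtain ⟨za, zb⟩ := z
    simp [mul_def, one_def]
  mul_one z := by
    obtain ⟨za, zb⟩ := z
    simp [mul_def, one_def]
  inv_mul_cancel z := by
    simp only [mul_def, inv_def, one_def, Aff.mk.injEq]
    exact ⟨by simp, inv_mul_cancel z.b⟩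

end Aff

/-- The automorphism of the affine group induced by a ring automorphism `φ` of `F`,
given by `(a,b) ↦ (φ(a), φ(b))`. -/
def affMap {F : Type*} [Field F] (φ : F ≃+* F) (h : Aff F) : Aff F :=
  ⟨φ h.a, Units.map (φ : F →+* F).toMonoidHom h.b⟩

section Aux

variable {F : Type*} [Field F]

/-- Projection of the affine group onto the units. -/
def affProj : Aff F →* Fˣ where
  toFun h := h.b
  map_one' := rfl
  map_mul' _ _ := rfl

lemma aff_pow_translation (a : F) (n : ℕ) : (⟨a, 1⟩ : Aff F) ^ n = ⟨n • a, 1⟩ := by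
  induction n with
  | zero => simp [Aff.one_def]
  | succ n ih =>
    rw [pow_succ, ih, Aff.mul_def]
    simp [succ_nsmul, add_mul]

variable [Fintype F]

lemma unit_fixed (α : Aff F ≃* Aff F) (a : F) : (α ⟨a, 1⟩).b = 1 := by
  classical
  haveI := ringChar.charP F
  set p := ringChar F with hp
  have hpprime : p.Prime := CharP.char_is_prime F p
  have hpow : (⟨a, 1⟩ : Aff F) ^ p = 1 := by
    rw [aff_pow_translation, nsmul_eq_mul, CharP.cast_eq_zero F p, zero_mul,
      Aff.one_def]
  have h1 : (α ⟨a, 1⟩) ^ p = 1 := by rw [← map_pow, hpow, map_one]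
  have h2 : ((α ⟨a, 1⟩).b) ^ p = 1 := by
    have := congrArg affProj h1
    rwa [map_pow, map_one] at this
  have hdvd1 : orderOf (α ⟨a, 1⟩).b ∣ p := orderOf_dvd_of_pow_eq_one h2
  have hdvd2 : orderOf (α ⟨a, 1⟩).b ∣ Fintype.card F - 1 := by
    rw [← Fintype.card_units]; exact orderOf_dvd_card
  have hpq : p ∣ Fintype.card F := by
    obtain ⟨n, hn1, hn2⟩ := FiniteField.card F p
    exact hn2 ▸ dvd_pow_self p n.2.ne'
  have hnd : ¬ p ∣ Fintype.card F - 1 := by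
    intro hcon
    have : p ∣ Fintype.card F - (Fintype.card F - 1) := Nat.dvd_sub hpq hcon
    rw [Nat.sub_sub_self Fintype.card_pos] at this
    exact hpprime.one_lt.ne' (Nat.dvd_one.mp this)
  have : orderOf (α ⟨a, 1⟩).b = 1 := by
    rcases (Nat.dvd_prime hpprime).mp hdvd1 with h | h
    · exact h
    · exact absurd (h ▸ hdvd2) hnd
  exact orderOf_eq_one_iff.mp this

lemma aff_conj_translation (w : Aff F) (x : F) :
    w * ⟨x, 1⟩ * w⁻¹ = ⟨(w.b : F) * x, 1⟩ := by
  rw [Aff.mul_def, Aff.mul_def, Aff.inv_def]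
  have hb : (w.b : F) ≠ 0 := w.b.ne_zero
  refine Aff.ext ?_ ?_
  · simp only [Units.val_mul, Units.val_one, mul_one, Units.val_inv_eq_inv_val]
    field_simp
    ring
  · simp

lemma aff_conj_formula (g z : Aff F) :
    g⁻¹ * z * g =
      ⟨((g.b⁻¹ : Fˣ) : F) * (z.a + ((z.b : F) - 1) * g.a), g.b⁻¹ * z.b * g.b⟩ := by
  rw [Aff.inv_def, Aff.mul_def, Aff.mul_def]
  have hb : (g.b : F) ≠ 0 := g.b.ne_zero
  refine Aff.ext ?_ ?_
  · simp only [Units.val_mul, Units.val_inv_eq_inv_val]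
    field_simp
    ring
  · rfl

variable (α : Aff F ≃* Aff F)

/-- The additive map underlying `α` on the translation subgroup. -/
noncomputable def sig (a : F) : F := (α ⟨a, 1⟩).a

lemma alpha_trans (a : F) : α ⟨a, 1⟩ = ⟨sig α a, 1⟩ :=
  Aff.ext rfl (unit_fixed α a)

lemma sig_zero : sig α 0 = 0 := by
  have h := map_one α
  rw [Aff.one_def] at h
  exact congrArg Aff.a h

lemma sig_add (a c : F) : sig α (a + c) = sig α a + sig α c := by
  have h : α (⟨a + c, 1⟩ : Aff F) = α ⟨a, 1⟩ * α ⟨c, 1⟩ := by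
    rw [← map_mul]
    congr 1
    refine Aff.ext ?_ ?_ <;> simp [Aff.mul_def]
  rw [alpha_trans, alpha_trans, alpha_trans, Aff.mul_def] at h
  simpa using congrArg Aff.a h

lemma sig_inj : Function.Injective (sig α) := by
  intro x y hxy
  have h : α ⟨x, 1⟩ = α ⟨y, 1⟩ := by rw [alpha_trans, alpha_trans, hxy]
  exact congrArg Aff.a (α.injective h)

lemma sig_conj (b : Fˣ) (a : F) :
    sig α ((b : F) * a) = ((α ⟨0, b⟩).b : F) * sig α a := by
  have h1 : (⟨0, b⟩ : Aff F) * ⟨a, 1⟩ * (⟨0, b⟩ : Aff F)⁻¹ = ⟨(b : F) * a, 1⟩ := by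
    refine Aff.ext ?_ ?_ <;> simp [Aff.mul_def, Aff.inv_def]
  have h2 := congrArg α h1
  rw [map_mul, map_mul, map_inv, alpha_trans α a, alpha_trans α ((b : F) * a),
    aff_conj_translation] at h2
  exact (congrArg Aff.a h2).symm

/-- The value `σ(1)`. -/
noncomputable def tval : F := sig α 1

lemma tval_ne : tval α ≠ 0 := fun h =>
  one_ne_zero (α := F) (sig_inj α (h.trans (sig_zero α).symm))

lemma sig_unit (b : Fˣ) :
    ((α ⟨0, b⟩).b : F) = (tval α)⁻¹ * sig α (b : F) := by
  have h := sig_conj α b 1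
  rw [mul_one] at h
  have ht : sig α 1 ≠ 0 := tval_ne α
  rw [h]
  show _ = (sig α 1)⁻¹ * _
  field_simp

lemma sig_mul (x y : F) :
    sig α (x * y) = (tval α)⁻¹ * sig α x * sig α y := by
  rcases eq_or_ne x 0 with hx | hx
  · simp [hx, sig_zero]
  · have h := sig_conj α (Units.mk0 x hx) y
    rw [sig_unit] at h
    simpa [Units.val_mk0] using h

/-- The ring homomorphism `x ↦ σ(1)⁻¹ σ(x)` associated to `α`. -/
noncomputable def phiHom : F →+* F where
  toFun x := (tval α)⁻¹ * sig α x
  map_one' := inv_mul_cancel₀ (tval_ne α)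
  map_mul' x y := by
    show (tval α)⁻¹ * sig α (x * y) = ((tval α)⁻¹ * sig α x) * ((tval α)⁻¹ * sig α y)
    rw [sig_mul]; ring
  map_zero' := by simp [sig_zero]
  map_add' x y := by
    show (tval α)⁻¹ * sig α (x + y) = (tval α)⁻¹ * sig α x + (tval α)⁻¹ * sig α y
    rw [sig_add]; ring

lemma phiHom_inj : Function.Injective (phiHom α) := fun x y h =>
  sig_inj α (mul_left_cancel₀ (inv_ne_zero (tval_ne α)) h)

/-- The ring automorphism associated to `α`. -/
noncomputable def phi : F ≃+* F :=
  RingEquiv.ofBijective (phiHom α) ((Finite.injective_iff_bijective).mp (phiHom_inj α))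

lemma phi_apply (x : F) : phi α x = (tval α)⁻¹ * sig α x := rfl

lemma alpha_unit (b : Fˣ) :
    α ⟨0, b⟩ = ⟨(α ⟨0, b⟩).a, Units.map ((phi α : F ≃+* F) : F →+* F).toMonoidHom b⟩ := by
  refine Aff.ext rfl ?_
  ext
  rw [Units.coe_map]
  exact sig_unit α b

end Aux

/-- Every group automorphism `α` of the affine group of a finite field `F`
has the form `α(h) = g⁻¹·φ̂(h)·g` for some `g` in the affine group and some ring
automorphism `φ` of `F`; moreover `φ` is uniquely determined by `α`. -/
theorem stmt_16 {F : Type*} [Field F] [Fintype F] (α : Aff F ≃* Aff F) :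
    (∃ (g : Aff F) (φ : F ≃+* F), ∀ h : Aff F, α h = g⁻¹ * affMap φ h * g) ∧
    (∀ (g g' : Aff F) (φ φ' : F ≃+* F),
      (∀ h : Aff F, g⁻¹ * affMap φ h * g = g'⁻¹ * affMap φ' h * g') → φ = φ') := by
  classical
  have key : ∀ (gg : Aff F) (ψ : F ≃+* F) (x : F),
      (gg⁻¹ * affMap ψ ⟨x, 1⟩ * gg).a = ((gg.b⁻¹ : Fˣ) : F) * ψ x := by
    intro gg ψ x
    have haff : affMap ψ (⟨x, 1⟩ : Aff F) = ⟨ψ x, 1⟩ := by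
      refine Aff.ext rfl ?_
      simp [affMap]
    rw [haff, aff_conj_formula]
    simp
  constructor
  · -- existence
    set t := tval α with htdef
    have ht : t ≠ 0 := tval_ne α
    have hφa : ∀ x : F, phi α x = t⁻¹ * sig α x := phi_apply α
    have hcoc : ∀ b b' : Fˣ,
        (α ⟨0, b * b'⟩).a = (α ⟨0, b⟩).a + phi α (b : F) * (α ⟨0, b'⟩).a := by
      intro b b'
      have h : α ⟨0, b * b'⟩ = α ⟨0, b⟩ * α ⟨0, b'⟩ := by
        rw [← map_mul]
        congr 1
        refine Aff.ext ?_ ?_ <;> simp [Aff.mul_def]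
      have h2 := congrArg Aff.a h
      simp only [Aff.mul_def] at h2
      rw [sig_unit α b] at h2
      rw [hφa]
      exact h2
    set m := ∑ b : Fˣ, (α ⟨0, b⟩).a with hmdef
    have hcard : ((Fintype.card Fˣ : ℕ) : F) = -1 := by
      rw [Fintype.card_units, Nat.cast_sub Fintype.card_pos, Nat.cast_one,
        FiniteField.cast_card_eq_zero, zero_sub]
    have hcb : ∀ b : Fˣ, (α ⟨0, b⟩).a = phi α (b : F) * m - m := by
      intro b
      have h1 : ∑ b' : Fˣ, (α ⟨0, b * b'⟩).a = m := by
        have := Equiv.sum_comp (Equiv.mulLeft b) (fun b' : Fˣ => (α ⟨0, b'⟩).a)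
        simpa using this
      have h2 : ∑ b' : Fˣ, (α ⟨0, b * b'⟩).a
          = (Fintype.card Fˣ) • (α ⟨0, b⟩).a + phi α (b : F) * m := by
        simp_rw [hcoc]
        rw [Finset.sum_add_distrib, Finset.sum_const, ← Finset.mul_sum,
          Finset.card_univ, hmdef]
      have h3 := h1.symm.trans h2
      rw [nsmul_eq_mul, hcard] at h3
      linear_combination h3
    refine ⟨⟨t⁻¹ * m, (Units.mk0 t ht)⁻¹⟩, phi α, ?_⟩
    intro h
    obtain ⟨a, b⟩ := h
    have hsplit : (⟨a, b⟩ : Aff F) = ⟨a, 1⟩ * ⟨0, b⟩ := by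
      refine Aff.ext ?_ ?_ <;> simp [Aff.mul_def]
    conv_lhs => rw [hsplit]
    rw [map_mul, alpha_trans, alpha_unit α b, aff_conj_formula, Aff.mul_def]
    have hsa : sig α a = t * phi α a := by
      rw [hφa]
      field_simp
    refine Aff.ext ?_ ?_
    · show sig α a + ((1 : Fˣ) : F) * (α ⟨0, b⟩).a = _
      simp only [Units.val_one, one_mul, inv_inv, Units.val_mk0, Units.coe_map,
        affMap, RingHom.toMonoidHom_eq_coe, MonoidHom.coe_coe, RingEquiv.coe_toRingHom]
      rw [hcb b, hsa]
      field_simp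
    · show (1 : Fˣ) * _ = _
      rw [one_mul, inv_inv]
      simp [affMap, mul_comm]
  · -- uniqueness
    intro g g' φ φ' hgg
    have h1 := congrArg Aff.a (hgg ⟨1, 1⟩)
    rw [key, key, map_one, map_one, mul_one, mul_one] at h1
    ext x
    have h2 := congrArg Aff.a (hgg ⟨x, 1⟩)
    rw [key, key, h1] at h2
    exact mul_left_cancel₀ (Units.ne_zero _) h2
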